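/- For the smallest positive solution λ_ℓ of tan(√λ(ℓ − a/N)) = √λ ℓ with a/N ≪ ℓ, one has the asymptotic expansion λ_ℓ = (3a/(Nℓ³))·(1 + (9/5)(a/(Nℓ)) + O((a/(Nℓ))²)) as a/(Nℓ) → 0. -/

import Mathlib

open Real Set


private lemma mono_aux {f f' : ℝ → ℝ} (hf : ∀ x, HasDerivAt f (f' x) x)
    (hd : ∀ x, 0 < x → 0 ≤ f' x) (h0 : f 0 = 0) {x : ℝ} (hx : 0 ≤ x) : 0 ≤ f x := by
  have hmono : MonotoneOn f (Set.Ici (0:ℝ)) := by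
    apply monotoneOn_of_deriv_nonneg (convex_Ici 0)
    · exact (continuous_iff_continuousAt.2 fun y => (hf y).continuousAt).continuousOn
    · intro y _; exact (hf y).differentiableAt.differentiableWithinAt
    · intro y hy
      rw [interior_Ici] at hy
      rw [(hf y).deriv]
      exact hd y hy
  have := hmono Set.self_mem_Ici hx hx
  simpa [h0] using this

private lemma sin_ge_poly3 {x : ℝ} (hx : 0 ≤ x) : x - x^3/6 ≤ Real.sin x := by
  have h := mono_aux (f := fun y => Real.sin y - (y - y^3/6))
      (f' := fun y => Real.cos y - (1 - y^2/2))
      (fun y => by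
        have h2 : HasDerivAt (fun y : ℝ => y - y^3/6) (1 - y^2/2) y := by
          have := (hasDerivAt_id y).sub ((hasDerivAt_pow 3 y).div_const 6)
          exact this.congr_deriv (by push_cast; ring)
        exact (Real.hasDerivAt_sin y).sub h2)
      (fun y _ => by have := Real.one_sub_sq_div_two_le_cos (x := y); linarith)
      (by norm_num) hx
  linarith

private lemma cos_le_poly4 {x : ℝ} (hx : 0 ≤ x) : Real.cos x ≤ 1 - x^2/2 + x^4/24 := by
  have h := mono_aux (f := fun y => (1 - y^2/2 + y^4/24) - Real.cos y)
      (f' := fun y => Real.sin y - (y - y^3/6))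
      (fun y => by
        have h2 : HasDerivAt (fun y : ℝ => 1 - y^2/2 + y^4/24) (-(y - y^3/6)) y := by
          have := (((hasDerivAt_const y (1:ℝ)).sub ((hasDerivAt_pow 2 y).div_const 2)).add
            ((hasDerivAt_pow 4 y).div_const 24))
          exact this.congr_deriv (by push_cast; ring)
        have := h2.sub (Real.hasDerivAt_cos y)
        exact this.congr_deriv (by ring))
      (fun y hy => by have := sin_ge_poly3 hy.le; linarith)
      (by norm_num) hx
  linarith

private lemma sin_le_poly5 {x : ℝ} (hx : 0 ≤ x) : Real.sin x ≤ x - x^3/6 + x^5/120 := by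
  have h := mono_aux (f := fun y => (y - y^3/6 + y^5/120) - Real.sin y)
      (f' := fun y => (1 - y^2/2 + y^4/24) - Real.cos y)
      (fun y => by
        have h2 : HasDerivAt (fun y : ℝ => y - y^3/6 + y^5/120) (1 - y^2/2 + y^4/24) y := by
          have := ((hasDerivAt_id y).sub ((hasDerivAt_pow 3 y).div_const 6)).add
            ((hasDerivAt_pow 5 y).div_const 120)
          exact this.congr_deriv (by push_cast; ring)
        exact h2.sub (Real.hasDerivAt_sin y))
      (fun y hy => by have := cos_le_poly4 hy.le; linarith)
      (by norm_num) hx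
  linarith

private lemma cos_ge_poly6 {x : ℝ} (hx : 0 ≤ x) :
    1 - x^2/2 + x^4/24 - x^6/720 ≤ Real.cos x := by
  have h := mono_aux (f := fun y => Real.cos y - (1 - y^2/2 + y^4/24 - y^6/720))
      (f' := fun y => (y - y^3/6 + y^5/120) - Real.sin y)
      (fun y => by
        have h2 : HasDerivAt (fun y : ℝ => 1 - y^2/2 + y^4/24 - y^6/720)
            (-(y - y^3/6 + y^5/120)) y := by
          have := (((hasDerivAt_const y (1:ℝ)).sub ((hasDerivAt_pow 2 y).div_const 2)).add
            ((hasDerivAt_pow 4 y).div_const 24)).sub ((hasDerivAt_pow 6 y).div_const 720)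
          exact this.congr_deriv (by push_cast; ring)
        have := (Real.hasDerivAt_cos y).sub h2
        exact this.congr_deriv (by ring))
      (fun y hy => by have := sin_le_poly5 hy.le; linarith)
      (by norm_num) hx
  linarith

private lemma sin_ge_poly7 {x : ℝ} (hx : 0 ≤ x) :
    x - x^3/6 + x^5/120 - x^7/5040 ≤ Real.sin x := by
  have h := mono_aux (f := fun y => Real.sin y - (y - y^3/6 + y^5/120 - y^7/5040))
      (f' := fun y => Real.cos y - (1 - y^2/2 + y^4/24 - y^6/720))
      (fun y => by
        have h2 : HasDerivAt (fun y : ℝ => y - y^3/6 + y^5/120 - y^7/5040)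
            (1 - y^2/2 + y^4/24 - y^6/720) y := by
          have := (((hasDerivAt_id y).sub ((hasDerivAt_pow 3 y).div_const 6)).add
            ((hasDerivAt_pow 5 y).div_const 120)).sub ((hasDerivAt_pow 7 y).div_const 5040)
          exact this.congr_deriv (by push_cast; ring)
        exact (Real.hasDerivAt_sin y).sub h2)
      (fun y hy => by have := cos_ge_poly6 hy.le; linarith)
      (by norm_num) hx
  linarith

private lemma tan_approx {x : ℝ} (h0 : 0 ≤ x) (h2 : x ≤ 1/2) :
    |Real.tan x - (x + x^3/3 + 2/15*x^5)| ≤ x^7 := by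
  have hc : (7:ℝ)/8 ≤ Real.cos x := by
    have := Real.one_sub_sq_div_two_le_cos (x := x); nlinarith
  have hcpos : 0 < Real.cos x := by linarith
  have hs5 := sin_le_poly5 h0
  have hs7 := sin_ge_poly7 h0
  have hc4 := cos_le_poly4 h0
  have hs3 := sin_ge_poly3 h0
  have hc6 := cos_ge_poly6 h0
  have hq7 : x^7 ≤ x := by nlinarith [pow_nonneg h0 2, pow_nonneg h0 3, pow_nonneg h0 5]
  have hqpos : (0:ℝ) ≤ x + x^3/3 + 2/15*x^5 - x^7 := by
    have : (0:ℝ) ≤ x^3/3 + 2/15*x^5 := by positivity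
    linarith
  have hqpos' : (0:ℝ) ≤ x + x^3/3 + 2/15*x^5 + x^7 := by positivity
  have key1 : (x + x^3/3 + 2/15*x^5 - x^7) * Real.cos x ≤ Real.sin x := by
    nlinarith [mul_le_mul_of_nonneg_left hc4 hqpos, hs7, pow_nonneg h0 7, pow_nonneg h0 9,
      pow_nonneg h0 11, sq_nonneg x, pow_nonneg h0 2]
  have key2 : Real.sin x ≤ (x + x^3/3 + 2/15*x^5 + x^7) * Real.cos x := by
    nlinarith [mul_le_mul_of_nonneg_left hc6 hqpos', hs5, pow_nonneg h0 7, pow_nonneg h0 9,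
      pow_nonneg h0 11, sq_nonneg x, pow_nonneg h0 2, pow_nonneg h0 13]
  rw [Real.tan_eq_sin_div_cos, abs_le]
  constructor
  · have := (le_div_iff₀ hcpos).2 key1
    linarith
  · have := (div_le_iff₀ hcpos).2 key2
    linarith

set_option maxHeartbeats 2000000 in
private lemma key_alg {x δ : ℝ} (hx0 : 0 < x) (hx2 : x ≤ 1/2) (hδ0 : 0 < δ) (hδ1 : δ ≤ 1/50)
    (heq : Real.tan x = (1+δ)*x) :
    |x^2*(1+δ)^2 - (3*δ + 12/5*δ^2)| ≤ 300*δ^3 := by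
  have h := tan_approx hx0.le hx2
  rw [heq] at h
  have hrw : (1+δ)*x - (x + x^3/3 + 2/15*x^5) = (δ - (x^2/3 + 2/15*x^4))*x := by ring
  rw [hrw, abs_mul, abs_of_pos hx0] at h
  have h' : |δ - (x^2/3 + 2/15*x^4)| ≤ x^6 := by
    have hx7 : x^7 = x^6 * x := by ring
    rw [hx7] at h
    exact le_of_mul_le_mul_right h hx0
  rw [abs_le] at h'
  obtain ⟨hl, hr⟩ := h'
  have hx2sq : x^2 ≤ 1/4 := by nlinarith
  have hx4 : x^4 ≤ 1/16 := by nlinarith [pow_nonneg hx0.le 2]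
  have hx6 : x^6 ≤ x^2/16 := by nlinarith [sq_nonneg x, pow_nonneg hx0.le 2]
  have e1 : x^2 ≤ 4*δ := by nlinarith [pow_nonneg hx0.le 4]
  have e4 : x^4 ≤ 16*δ^2 := by nlinarith [pow_nonneg hx0.le 2, sq_nonneg (x^2 - 4*δ)]
  have e6 : x^6 ≤ 64*δ^3 := by nlinarith [pow_nonneg hx0.le 2, pow_nonneg hx0.le 4, e1, e4]
  have e2u : x^2 - 3*δ ≤ 11*δ^2 := by nlinarith
  have e2l : -(11*δ^2) ≤ x^2 - 3*δ := by nlinarith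
  have e4' : |x^4 - 9*δ^2| ≤ 80*δ^3 := by
    have : x^4 - 9*δ^2 = (x^2 - 3*δ)*(x^2 + 3*δ) := by ring
    rw [this, abs_mul]
    have h1 : |x^2 - 3*δ| ≤ 11*δ^2 := abs_le.2 ⟨e2l, e2u⟩
    have h2 : |x^2 + 3*δ| ≤ 7*δ := by
      rw [abs_of_pos (by positivity)]; linarith
    calc |x^2 - 3*δ| * |x^2 + 3*δ| ≤ (11*δ^2) * (7*δ) :=
          mul_le_mul h1 h2 (abs_nonneg _) (by positivity)
      _ ≤ 80*δ^3 := by nlinarith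
  have e5 : |x^2 - (3*δ - 18/5*δ^2)| ≤ 230*δ^3 := by
    rw [abs_le] at e4' ⊢
    constructor <;> linarith [e4'.1, e4'.2, e6, hl, hr]
  rw [abs_le] at e5 ⊢
  have u1 : (x^2 - (3*δ - 18/5*δ^2))*(1+δ)^2 ≤ 230*δ^3*(1+δ)^2 :=
    mul_le_mul_of_nonneg_right e5.2 (sq_nonneg _)
  have u2 : (-(230*δ^3))*(1+δ)^2 ≤ (x^2 - (3*δ - 18/5*δ^2))*(1+δ)^2 :=
    mul_le_mul_of_nonneg_right e5.1 (sq_nonneg _)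
  have hd3 : (0:ℝ) ≤ δ^3 := by positivity
  have hd4 : (0:ℝ) ≤ δ^4 := by positivity
  constructor <;> nlinarith [u1, u2, hd3, hd4, sq_nonneg δ, hδ0.le]

private lemma cos_ne_half {y : ℝ} (h1 : 0 ≤ y) (h2 : y ≤ 1/2) : Real.cos y ≠ 0 := by
  have := Real.one_sub_sq_div_two_le_cos (x := y)
  have : (7:ℝ)/8 ≤ Real.cos y := by nlinarith
  linarith

private lemma ivt_neg {δ p : ℝ} (hδ0 : 0 < δ) (hδ1 : δ ≤ 1/50) (hp0 : 0 < p)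
    (hp2 : p^2 = 2*δ) (hple : p ≤ 1/2) : Real.tan p - (1+δ)*p ≤ 0 := by
  have h := tan_approx hp0.le hple
  rw [abs_le] at h
  nlinarith [h.2, pow_pos hp0 3, pow_pos hp0 5, pow_pos hp0 7, sq_nonneg p]

private lemma ivt_pos {δ : ℝ} (hδ1 : δ ≤ 1/50) : 0 ≤ Real.tan (1/2) - (1+δ)*(1/2) := by
  have h := tan_approx (by norm_num : (0:ℝ) ≤ 1/2) le_rfl
  rw [abs_le] at h
  nlinarith [h.1]

private lemma delta_le {δ ε : ℝ} (hε0 : 0 < ε) (hεle : ε ≤ 1/100) (hδ0 : 0 < δ)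
    (hde : δ - ε = δ*ε) : δ ≤ 2*ε := by
  nlinarith [mul_le_mul_of_nonneg_left hεle hδ0.le]

private lemma conv_bound {δ ε M : ℝ} (hε0 : 0 < ε) (hεle : ε ≤ 1/100) (hδ0 : 0 < δ)
    (hde : δ - ε = δ*ε) (hkey : |M - (3*δ + 12/5*δ^2)| ≤ 300*δ^3) :
    |M - (3*ε + 27/5*ε^2)| ≤ 10000*ε^3 := by
  have hδ2ε : δ ≤ 2*ε := delta_le hε0 hεle hδ0 hde
  have h8 : δ^3 ≤ 8*ε^3 := by
    nlinarith [mul_nonneg (by linarith : (0:ℝ) ≤ 2*ε - δ)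
      (by positivity : (0:ℝ) ≤ (2*ε)^2 + 2*ε*δ + δ^2)]
  have q1 : δ*ε^2 ≤ 2*ε^3 := by
    nlinarith [mul_le_mul_of_nonneg_right hδ2ε (sq_nonneg ε)]
  have qde : δ*ε ≤ 2*ε^2 := by
    nlinarith [mul_le_mul_of_nonneg_right hδ2ε hε0.le]
  have q2 : δ*ε*(δ+ε) ≤ 6*ε^3 := by
    nlinarith [mul_le_mul qde (by linarith : δ+ε ≤ 3*ε)
      (by positivity : (0:ℝ) ≤ δ+ε) (by positivity : (0:ℝ) ≤ 2*ε^2)]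
  have hid : 3*δ + 12/5*δ^2 - (3*ε + 27/5*ε^2) = 3*(δ*ε^2) + 12/5*(δ*ε*(δ+ε)) := by
    linear_combination (3 + 12/5*(δ+ε) + 3*ε) * hde
  have q0 : 0 ≤ 3*(δ*ε^2) + 12/5*(δ*ε*(δ+ε)) := by positivity
  rw [abs_le] at hkey ⊢
  constructor
  · linarith [hkey.1, h8]
  · linarith [hkey.2, h8]

set_option maxHeartbeats 1000000 in
/-- Asymptotics of the smallest positive solution `λ` of `tan(√λ(ℓ − b)) = √λ ℓ`
(with `b = a/N`): writing `ε = b/ℓ`, one has `λ ℓ² = 3ε + (27/5)ε² + O(ε³)` as `ε → 0`. -/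
theorem stmt5 :
    ∃ C > 0, ∃ ε₀ > 0, ∀ b ℓ lam : ℝ, 0 < b → b < ℓ → b / ℓ ≤ ε₀ →
      IsLeast {t : ℝ | 0 < t ∧ Real.tan (Real.sqrt t * (ℓ - b)) = Real.sqrt t * ℓ} lam →
      |lam * ℓ ^ 2 - (3 * (b / ℓ) + 27 / 5 * (b / ℓ) ^ 2)| ≤ C * (b / ℓ) ^ 3 := by
  refine ⟨10000, by norm_num, 1/100, by norm_num, fun b ℓ lam hb hbl hεle hL => ?_⟩
  have hℓ : 0 < ℓ := hb.trans hbl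
  have hlb : 0 < ℓ - b := by linarith
  set ε : ℝ := b / ℓ with hεdef
  have hε0 : 0 < ε := div_pos hb hℓ
  set δ : ℝ := b / (ℓ - b) with hδdef
  have hδ0 : 0 < δ := div_pos hb hlb
  have hδε : δ * (1 - ε) = ε := by
    rw [hδdef, hεdef]
    field_simp
  have hde : δ - ε = δ*ε := by linear_combination hδε
  have hεle' : ε ≤ 1/100 := hεle
  have hδ2ε : δ ≤ 2 * ε := delta_le hε0 hεle' hδ0 hde
  have hδ1 : δ ≤ 1/50 := by linarith
  have hℓδ : (1 + δ) * (ℓ - b) = ℓ := by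
    rw [hδdef]; field_simp; ring
  -- IVT to find a small solution
  set p : ℝ := Real.sqrt (2*δ) with hpdef
  have hp0 : 0 < p := Real.sqrt_pos.2 (by linarith)
  have hp2 : p^2 = 2*δ := Real.sq_sqrt (by linarith)
  have hple : p ≤ 1/2 := by
    have h1 : p ≤ Real.sqrt (1/4) := Real.sqrt_le_sqrt (by linarith)
    rwa [show (1:ℝ)/4 = (1/2)^2 by norm_num, Real.sqrt_sq (by norm_num)] at h1
  have hcont : ContinuousOn (fun y => Real.tan y - (1+δ)*y) (Set.Icc p (1/2)) := by
    apply ContinuousOn.sub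
    · intro y hy
      exact (Real.continuousAt_tan.2 (cos_ne_half (hp0.le.trans hy.1) hy.2)).continuousWithinAt
    · fun_prop
  obtain ⟨xs, hxsmem, hfxs⟩ := intermediate_value_Icc hple hcont
    ⟨ivt_neg hδ0 hδ1 hp0 hp2 hple, ivt_pos hδ1⟩
  have hxs0 : 0 < xs := lt_of_lt_of_le hp0 hxsmem.1
  have hxs2 : xs ≤ 1/2 := hxsmem.2
  have htanxs : Real.tan xs = (1+δ)*xs := by
    have : Real.tan xs - (1+δ)*xs = 0 := hfxs
    linarith
  -- the corresponding element of S
  set t : ℝ := (xs/(ℓ-b))^2 with htdef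
  have ht0 : 0 < t := by positivity
  have hsqrt_t : Real.sqrt t = xs/(ℓ-b) := Real.sqrt_sq (by positivity)
  have htmem : t ∈ {t : ℝ | 0 < t ∧ Real.tan (Real.sqrt t * (ℓ - b)) = Real.sqrt t * ℓ} := by
    refine ⟨ht0, ?_⟩
    rw [hsqrt_t]
    have h1 : xs/(ℓ-b) * (ℓ-b) = xs := by field_simp
    rw [h1, htanxs, hδdef]
    field_simp
    ring
  have hlam_le : lam ≤ t := hL.2 htmem
  have hlam0 : 0 < lam := hL.1.1
  have heqlam := hL.1.2
  set x : ℝ := Real.sqrt lam * (ℓ - b) with hxdef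
  have hx0 : 0 < x := by
    have := Real.sqrt_pos.2 hlam0
    positivity
  have hxle : x ≤ xs := by
    have h1 : Real.sqrt lam ≤ Real.sqrt t := Real.sqrt_le_sqrt hlam_le
    rw [hsqrt_t] at h1
    calc x ≤ xs/(ℓ-b) * (ℓ-b) := mul_le_mul_of_nonneg_right h1 hlb.le
      _ = xs := by field_simp
  have hx2 : x ≤ 1/2 := hxle.trans hxs2
  have heq : Real.tan x = (1+δ)*x := by
    rw [heqlam, hxdef, hδdef]
    field_simp
    ring
  have hkey := key_alg hx0 hx2 hδ0 hδ1 heq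
  have hx2eq : x^2 = lam*(ℓ-b)^2 := by
    rw [hxdef, mul_pow, Real.sq_sqrt hlam0.le]
  have hμ : x^2*(1+δ)^2 = lam * ℓ^2 := by
    calc x^2*(1+δ)^2 = lam*((1+δ)*(ℓ-b))^2 := by rw [hx2eq]; ring
      _ = lam*ℓ^2 := by rw [hℓδ]
  rw [hμ] at hkey
  exact conv_bound hε0 hεle' hδ0 hde hkey
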